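/- arXiv:2211.12655 — 2 statements merged into one kernel-verified Lean document; each statement's English description precedes it below -/
import Mathlib

section
/- The function t ↦ u^t / (1 - t(1-u)) is strictly convex on the interval where 1 - t(1-u) > 0, for any fixed real u > 0 with u ≠ 1. -/
theorem theta_strictConvex (u : ℝ) (hu : 0 < u) (hu1 : u ≠ 1) :
    StrictConvexOn ℝ {t : ℝ | 0 < 1 - t * (1 - u)}
      (fun t : ℝ => u ^ t / (1 - t * (1 - u))) := by
  have ha : (1 : ℝ) - u ≠ 0 := sub_ne_zero.2 (Ne.symm hu1)
  set a := 1 - u with ha'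
  set c := Real.log u with hc
  have hfeq : (fun t : ℝ => u ^ t / (1 - t * a)) =
      fun t : ℝ => Real.exp (c * t) / (1 - t * a) := by
    funext t
    rw [Real.rpow_def_of_pos hu]
  rw [hfeq]
  set f := fun t : ℝ => Real.exp (c * t) / (1 - t * a) with hf
  set f' := fun t : ℝ => Real.exp (c * t) * (c * (1 - t * a) + a) / (1 - t * a) ^ 2 with hf'
  set f'' := fun t : ℝ => Real.exp (c * t) * ((c * (1 - t * a) + a) ^ 2 + a ^ 2) / (1 - t * a) ^ 3
    with hf''
  set s := {t : ℝ | 0 < 1 - t * a} with hs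
  have hsopen : IsOpen s := isOpen_lt continuous_const (by fun_prop)
  have hsconv : Convex ℝ s := by
    intro x hx y hy p q hp hq hpq
    simp only [hs, Set.mem_setOf_eq, smul_eq_mul] at *
    rcases (show (0:ℝ) ≤ p from hp).eq_or_lt with h | h
    · nlinarith
    · nlinarith [mul_pos h hx, mul_nonneg hq hy.le]
  -- basic derivative facts at a point of s
  have hexp : ∀ x : ℝ, HasDerivAt (fun t : ℝ => Real.exp (c * t)) (Real.exp (c * x) * c) x := by
    intro x
    simpa using ((hasDerivAt_id x).const_mul c).exp
  have hdlin : ∀ x : ℝ, HasDerivAt (fun t : ℝ => 1 - t * a) (-a) x := by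
    intro x
    simpa using ((hasDerivAt_id x).mul_const a).const_sub 1
  have hD1 : ∀ x ∈ s, HasDerivAt f (f' x) x := by
    intro x hx
    have hne : (1 : ℝ) - x * a ≠ 0 := ne_of_gt hx
    have h := (hexp x).div (hdlin x) hne
    refine h.congr_deriv ?_
    simp only [f']
    field_simp
    ring
  have hD2 : ∀ x ∈ s, HasDerivAt f' (f'' x) x := by
    intro x hx
    have hne : (1 : ℝ) - x * a ≠ 0 := ne_of_gt hx
    have hN : HasDerivAt (fun t : ℝ => Real.exp (c * t) * (c * (1 - t * a) + a))
        (Real.exp (c * x) * c * (c * (1 - x * a) + a) + Real.exp (c * x) * (c * (-a))) x :=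
      (hexp x).mul (((hdlin x).const_mul c).add_const a)
    have hDen : HasDerivAt (fun t : ℝ => (1 - t * a) ^ 2)
        ((2 : ℕ) * (1 - x * a) ^ 1 * (-a)) x := (hdlin x).pow 2
    have hne2 : ((1 : ℝ) - x * a) ^ 2 ≠ 0 := pow_ne_zero _ hne
    have h := hN.div hDen hne2
    refine h.congr_deriv ?_
    simp only [f'']
    field_simp
    ring
  -- deriv f agrees with f' on s
  have hderiv1 : ∀ x ∈ s, deriv f x = f' x := fun x hx => (hD1 x hx).deriv
  have hderiv2 : ∀ x ∈ s, deriv (deriv f) x = f'' x := by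
    intro x hx
    have hev : deriv f =ᶠ[nhds x] f' := by
      filter_upwards [hsopen.mem_nhds hx] with y hy using hderiv1 y hy
    rw [Filter.EventuallyEq.deriv_eq hev]
    exact (hD2 x hx).deriv
  have hcont : ContinuousOn f s := by
    apply ContinuousOn.div
    · fun_prop
    · fun_prop
    · intro x hx
      exact ne_of_gt hx
  have hpos : ∀ x ∈ interior s, 0 < deriv^[2] f x := by
    intro x hx
    rw [hsopen.interior_eq] at hx
    simp only [Function.iterate_succ, Function.iterate_zero, Function.comp_apply, id_eq]
    rw [hderiv2 x hx]
    have hdpos : (0 : ℝ) < 1 - x * a := hx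
    apply div_pos
    · apply mul_pos (Real.exp_pos _)
      have : 0 < a ^ 2 := pow_pos (abs_pos.mpr ha) 2 |>.trans_le (by rw [sq_abs])
      positivity
    · positivity
  exact strictConvexOn_of_deriv2_pos hsconv hcont hpos
end

section
/- For fixed real u > 0 with u ≠ 1, define ϑ(u,t) = u^t/(1 - t(1-u)). Then the derivative with respect to t of ϑ(u,t) + ϑ(u^{-1},t) vanishes at t = 1/2. -/
open Real

theorem deriv_theta_sum_half (u : ℝ) (hu : 0 < u) (hu1 : u ≠ 1) :
    deriv (fun t : ℝ => u ^ t / (1 - t * (1 - u))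
        + u⁻¹ ^ t / (1 - t * (1 - u⁻¹))) (1 / 2) = 0 := by
  have hui : 0 < u⁻¹ := inv_pos.mpr hu
  have hd1 : (0:ℝ) < 1 - (1/2 : ℝ) * (1 - u) := by nlinarith
  have hd2 : (0:ℝ) < 1 - (1/2 : ℝ) * (1 - u⁻¹) := by nlinarith
  have hden1 : HasDerivAt (fun t : ℝ => 1 - t * (1 - u)) (-(1 - u)) (1/2) := by
    simpa using ((hasDerivAt_id (1/2:ℝ)).mul_const (1 - u)).const_sub 1
  have hden2 : HasDerivAt (fun t : ℝ => 1 - t * (1 - u⁻¹)) (-(1 - u⁻¹)) (1/2) := by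
    simpa using ((hasDerivAt_id (1/2:ℝ)).mul_const (1 - u⁻¹)).const_sub 1
  have hn1 : HasDerivAt (fun t : ℝ => u ^ t) (u ^ (1/2:ℝ) * Real.log u) (1/2) :=
    (Real.hasStrictDerivAt_const_rpow hu (1/2)).hasDerivAt
  have hn2 : HasDerivAt (fun t : ℝ => u⁻¹ ^ t) (u⁻¹ ^ (1/2:ℝ) * Real.log u⁻¹) (1/2) :=
    (Real.hasStrictDerivAt_const_rpow hui (1/2)).hasDerivAt
  have h1 := hn1.div hden1 hd1.ne'
  have h2 := hn2.div hden2 hd2.ne'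
  have h : deriv (fun t : ℝ => u ^ t / (1 - t * (1 - u)) + u⁻¹ ^ t / (1 - t * (1 - u⁻¹))) (1 / 2) = _ :=
    (h1.add h2).deriv
  rw [h]
  have hru : u ^ (1/2:ℝ) > 0 := Real.rpow_pos_of_pos hu _
  have hrui : u⁻¹ ^ (1/2:ℝ) = (u ^ (1/2:ℝ))⁻¹ := Real.inv_rpow hu.le _
  have hlui : Real.log u⁻¹ = -Real.log u := Real.log_inv u
  rw [hrui, hlui]
  have hD2 : 1 - (1/2:ℝ) * (1 - u⁻¹) = (1 - (1/2:ℝ) * (1 - u)) / u := by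
    field_simp
    ring
  rw [hD2]
  set s := u ^ (1/2:ℝ) with hs
  have hs2 : s ^ 2 = u := by
    rw [hs, ← Real.rpow_natCast (u ^ (1/2:ℝ)) 2, ← Real.rpow_mul hu.le]; norm_num
  have hs0 : s ≠ 0 := hru.ne'
  rw [← hs2] at hd1 ⊢
  have h1ne : (1 - 1/2 * (1 - s^2)) ≠ 0 := hd1.ne'
  have hq : ((2:ℝ) + s^2*4 + s^4*2) ≠ 0 := by positivity
  field_simp [hs0, hq]
  ring_nf
end
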